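/- arXiv:2504.05915 — 3 statements merged into one kernel-verified Lean document; each statement's English description precedes it below -/
import Mathlib

section
/- Let λ > 1 and v ∈ ℝⁿ with |v| ≥ 1. Then ∫₁^∞ ⟨t^{2λ−1} v⟩^{-2} dt ≤ C·|v|^{-2} for a constant C depending only on λ, where ⟨y⟩ = √(1+|y|²). -/
open MeasureTheory

theorem stmt12 (n : ℕ) (l : ℝ) (hl : 1 < l) :
    ∃ C : ℝ, 0 < C ∧ ∀ v : EuclideanSpace ℝ (Fin n), 1 ≤ ‖v‖ →
      (∫ t in Set.Ioi (1:ℝ), (1 + (t ^ (2 * l - 1) * ‖v‖) ^ 2)⁻¹)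
        ≤ C * ‖v‖ ^ (-2 : ℝ) := by
  have hexp : (2 - 4*l) < -1 := by linarith
  have hden : (0:ℝ) < 4*l - 3 := by linarith
  refine ⟨(4*l - 3)⁻¹, by positivity, fun v hv => ?_⟩
  have hv0 : (0:ℝ) < ‖v‖ := lt_of_lt_of_le one_pos hv
  set g : ℝ → ℝ := fun t => ‖v‖ ^ (-2:ℝ) * t ^ (2 - 4*l) with hg
  have hgint : IntegrableOn g (Set.Ioi 1) :=
    (integrableOn_Ioi_rpow_of_lt hexp one_pos).const_mul _
  have hle : ∀ t ∈ Set.Ioi (1:ℝ),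
      (1 + (t ^ (2 * l - 1) * ‖v‖) ^ 2)⁻¹ ≤ g t := by
    intro t ht
    have ht0 : (0:ℝ) < t := lt_trans one_pos ht
    have h1 : (t ^ (2 * l - 1) * ‖v‖) ^ 2 = t ^ (4*l - 2) * ‖v‖ ^ 2 := by
      have h2 : (2*l-1)*(2:ℕ) = 4*l-2 := by push_cast; ring
      rw [mul_pow, ← Real.rpow_natCast (t ^ (2*l-1)) 2, ← Real.rpow_mul ht0.le, h2]
    have hx : (0:ℝ) < t ^ (4*l - 2) * ‖v‖ ^ 2 := by positivity
    have h2 : (1 + (t ^ (2 * l - 1) * ‖v‖) ^ 2)⁻¹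
        ≤ (t ^ (4*l - 2) * ‖v‖ ^ 2)⁻¹ := by
      rw [h1]
      exact inv_anti₀ hx (by linarith)
    refine h2.trans_eq ?_
    rw [hg]
    simp only [mul_inv]
    rw [← Real.rpow_neg ht0.le, ← Real.rpow_natCast ‖v‖ 2, ← Real.rpow_neg hv0.le]
    norm_num
    rw [mul_comm]
  have hmono : (∫ t in Set.Ioi (1:ℝ), (1 + (t ^ (2 * l - 1) * ‖v‖) ^ 2)⁻¹)
      ≤ ∫ t in Set.Ioi (1:ℝ), g t := by
    refine integral_mono_of_nonneg ?_ hgint ?_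
    · exact Filter.Eventually.of_forall fun t => by positivity
    · exact (ae_restrict_iff' measurableSet_Ioi).2
        (Filter.Eventually.of_forall hle)
  refine hmono.trans ?_
  rw [hg]
  rw [integral_const_mul, integral_Ioi_rpow_of_lt hexp one_pos]
  apply le_of_eq
  rw [Real.one_rpow]
  have h3 : 2 - 4*l + 1 = -(4*l-3) := by ring
  rw [h3, div_neg, neg_div, neg_neg, one_div, mul_comm]
end

section
/- Let ω > 0, σ > 0, λ = (1+√(1+4σ))/2, ρ with 1/λ < ρ < 1, and V : ℝⁿ → ℝ measurable with |V(y)| ≤ C⟨y⟩^{-ρ}. With α as in the previous context, the phase I_v = exp(−i ∫_{−∞}^{∞} V(α(t)v) dt) tends to 1 as |v| → ∞; equivalently, ∫_{−∞}^{∞} |V(α(t)v)| dt → 0 as |v| → ∞. -/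
open MeasureTheory Filter

lemma meas_rpow_const_aux (ρ : ℝ) : Measurable fun x : ℝ => x ^ ρ := by measurability

theorem stmt14 (n : ℕ) (ω σ : ℝ) (hω : 0 < ω) (hσ : 0 < σ)
    (l : ℝ) (hl : l = (1 + Real.sqrt (1 + 4 * σ)) / 2)
    (ρ : ℝ) (hρl : 1 / l < ρ) (hρ1 : ρ < 1)
    (V : EuclideanSpace ℝ (Fin n) → ℝ) (hVmeas : Measurable V)
    (C : ℝ) (hV : ∀ y, |V y| ≤ C * (Real.sqrt (1 + ‖y‖ ^ 2)) ^ (-ρ))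
    (α : ℝ → ℝ)
    (hα : ∀ t : ℝ, α t = if |t| ≤ 1 then Real.sinh (ω * t) / ω
      else if 1 < t then t ^ l / (2 * l - 1) else -((-t) ^ l) / (2 * l - 1)) :
    Tendsto (fun v : EuclideanSpace ℝ (Fin n) => ∫ t : ℝ, |V (α t • v)|)
      (comap norm atTop) (nhds 0) := by
  -- basic numerics
  have hsq : Real.sqrt (1 + 4 * σ) ^ 2 = 1 + 4 * σ := Real.sq_sqrt (by linarith)
  have hsnn : 0 ≤ Real.sqrt (1 + 4 * σ) := Real.sqrt_nonneg _
  have hl1 : 1 < l := by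
    have : 1 < Real.sqrt (1 + 4 * σ) := by nlinarith
    rw [hl]; linarith
  have hl0 : 0 < l := by linarith
  have hρ0 : 0 < ρ := lt_trans (by positivity) hρl
  have hlρ : 1 < l * ρ := by
    have := (div_lt_iff₀ hl0).mp hρl
    nlinarith
  have hc0 : 0 < 2 * l - 1 := by linarith
  set c : ℝ := 2 * l - 1 with hc
  have hC0 : 0 ≤ C := by
    have h0 := hV 0
    simp only [norm_zero] at h0
    norm_num at h0
    exact le_trans (abs_nonneg _) h0
  -- α is odd
  have hodd : ∀ t : ℝ, α (-t) = -α t := by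
    intro t
    rw [hα, hα]
    rcases le_or_gt |t| 1 with h | h
    · rw [if_pos (by rwa [abs_neg]), if_pos h, mul_neg, Real.sinh_neg, neg_div]
    · rw [if_neg (by rw [abs_neg]; exact not_le.mpr h), if_neg (not_le.mpr h)]
      rcases lt_or_ge 1 t with ht | ht
      · rw [if_neg (by linarith), if_pos ht, neg_neg, neg_div]
      · have ht' : t < -1 := by
          rcases abs_cases t with ⟨h1, _⟩ | ⟨h1, _⟩ <;> linarith
        rw [if_pos (by linarith), if_neg (not_lt.mpr ht), neg_div, neg_neg]
  -- |α t| for |t| > 1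
  have hαabs : ∀ t : ℝ, 1 < |t| → |α t| = |t| ^ l / c := by
    intro t ht
    rw [hα, if_neg (not_le.mpr ht)]
    rcases lt_or_ge 1 t with h | h
    · rw [if_pos h, abs_of_pos (by positivity), abs_of_pos (by linarith)]
    · have ht' : t < -1 := by
        rcases abs_cases t with ⟨h1, _⟩ | ⟨h1, _⟩ <;> linarith
      have hpos : (0:ℝ) < (-t) ^ l := Real.rpow_pos_of_pos (by linarith) l
      rw [if_neg (not_lt.mpr h), abs_of_neg
          (show -(-t) ^ l / c < 0 from div_neg_of_neg_of_pos (by linarith) hc0),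
        abs_of_neg (by linarith)]
      ring
  -- α t ≠ 0 for t ≠ 0
  have hαne : ∀ t : ℝ, t ≠ 0 → α t ≠ 0 := by
    intro t ht
    rcases le_or_gt |t| 1 with h | h
    · rw [hα, if_pos h]
      have : Real.sinh (ω * t) ≠ 0 := by
        rw [Real.sinh_ne_zero]
        exact mul_ne_zero (ne_of_gt hω) ht
      positivity
    · intro h0
      have habs := hαabs t h
      rw [h0, abs_zero] at habs
      have hpos : (0:ℝ) < |t| ^ l / c := by
        have := Real.rpow_pos_of_pos (lt_trans one_pos h) l
        positivity
      rw [← habs] at hpos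
      exact lt_irrefl 0 hpos
  -- measurability of α
  have hmα : Measurable α := by
    have : α = fun t => if |t| ≤ 1 then Real.sinh (ω * t) / ω
        else if 1 < t then t ^ l / c else -((-t) ^ l) / c := funext hα
    rw [this]
    apply Measurable.ite (measurableSet_le (measurable_abs) measurable_const)
    · exact (Real.measurable_sinh.comp (measurable_const.mul measurable_id)).div_const ω
    · apply Measurable.ite (measurableSet_lt measurable_const measurable_id)
      · exact (meas_rpow_const_aux l).div_const c
      · exact (((meas_rpow_const_aux l).comp measurable_neg).neg).div_const c
  have hmF : ∀ v : EuclideanSpace ℝ (Fin n),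
      Measurable fun t : ℝ => |V (α t • v)| := by
    intro v
    exact (hVmeas.comp (hmα.smul measurable_const)).abs
  -- the dominating function
  set G : ℝ → ℝ := fun t => C * Real.sqrt (1 + (α t) ^ 2) ^ (-ρ) with hG
  have hGnn : ∀ t, 0 ≤ G t := by
    intro t
    have h1 : (0:ℝ) < Real.sqrt (1 + (α t) ^ 2) := Real.sqrt_pos.mpr (by positivity)
    have := Real.rpow_pos_of_pos h1 (-ρ)
    positivity
  have hmG : Measurable G :=
    (((measurable_const.add ((hmα.pow_const 2))).sqrt.comp measurable_id |>.comp
      measurable_id) |> fun h => ((meas_rpow_const_aux (-ρ)).comp h).const_mul C)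
  -- G is bounded by C on sqrt ≥ 1
  have hGleC : ∀ t, G t ≤ C := by
    intro t
    have h1 : (1:ℝ) ≤ Real.sqrt (1 + α t ^ 2) :=
      Real.le_sqrt_of_sq_le (by nlinarith [sq_nonneg (α t)])
    have h2 : Real.sqrt (1 + α t ^ 2) ^ (-ρ) ≤ 1 := by
      calc Real.sqrt (1 + α t ^ 2) ^ (-ρ) ≤ (1:ℝ) ^ (-ρ) :=
            Real.rpow_le_rpow_of_nonpos one_pos h1 (by linarith)
        _ = 1 := Real.one_rpow _
    calc G t = C * Real.sqrt (1 + α t ^ 2) ^ (-ρ) := rfl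
      _ ≤ C * 1 := mul_le_mul_of_nonneg_left h2 hC0
      _ = C := mul_one C
  -- bound of G by power function on |t| > 1
  have hGbound : ∀ t : ℝ, 1 < |t| → G t ≤ (C * c ^ ρ) * |t| ^ (-(l * ρ)) := by
    intro t ht
    have habs : |α t| = |t| ^ l / c := hαabs t ht
    have ht0 : (0:ℝ) < |t| := lt_trans one_pos ht
    have htl : (0:ℝ) < |t| ^ l := Real.rpow_pos_of_pos ht0 l
    have hαpos : (0:ℝ) < |α t| := by rw [habs]; positivity
    have h1 : |α t| ≤ Real.sqrt (1 + (α t) ^ 2) := by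
      rw [← Real.sqrt_sq_eq_abs]
      exact Real.sqrt_le_sqrt (by linarith)
    have h2 : Real.sqrt (1 + (α t) ^ 2) ^ (-ρ) ≤ |α t| ^ (-ρ) :=
      Real.rpow_le_rpow_of_nonpos hαpos h1 (by linarith)
    have h3 : |α t| ^ (-ρ) = c ^ ρ * |t| ^ (-(l * ρ)) := by
      rw [habs, Real.div_rpow (le_of_lt htl) (le_of_lt hc0), ← Real.rpow_mul (le_of_lt ht0),
        Real.rpow_neg (le_of_lt hc0), div_inv_eq_mul, mul_neg, mul_comm]
    calc G t ≤ C * |α t| ^ (-ρ) := mul_le_mul_of_nonneg_left h2 hC0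
      _ = (C * c ^ ρ) * |t| ^ (-(l * ρ)) := by rw [h3]; ring
  -- integrability of G
  have hIoi : IntegrableOn G (Set.Ioi (1:ℝ)) := by
    have hKint : IntegrableOn (fun t : ℝ => (C * c ^ ρ) * t ^ (-(l * ρ))) (Set.Ioi 1) :=
      (integrableOn_Ioi_rpow_of_lt (by linarith) one_pos).const_mul _
    apply hKint.mono' (hmG.aestronglyMeasurable.restrict)
    filter_upwards [ae_restrict_mem measurableSet_Ioi] with t ht
    rw [Real.norm_eq_abs, abs_of_nonneg (hGnn t)]
    have h1 : 1 < |t| := by rw [abs_of_pos (by linarith [Set.mem_Ioi.mp ht])]; exact ht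
    have := hGbound t h1
    rwa [abs_of_pos (by linarith [Set.mem_Ioi.mp ht])] at this
  have hIcc : IntegrableOn G (Set.Icc (-1:ℝ) 1) := by
    have hconst : IntegrableOn (fun _ : ℝ => C) (Set.Icc (-1:ℝ) 1) :=
      (integrableOn_const_iff).mpr (Or.inr measure_Icc_lt_top)
    apply hconst.mono' (hmG.aestronglyMeasurable.restrict)
    filter_upwards with t
    rw [Real.norm_eq_abs, abs_of_nonneg (hGnn t)]
    exact hGleC t
  have h_map : (volume.restrict (Set.Ioi (1:ℝ))).map Neg.neg
      = volume.restrict (Set.Iio (-1:ℝ)) := by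
    have hpre : (Neg.neg ⁻¹' (Set.Iio (-1:ℝ))) = Set.Ioi 1 := by
      ext x
      simp [neg_lt]
    conv_rhs => rw [← Measure.map_neg_eq_self (volume : Measure ℝ),
      measurableEmbedding_neg.restrict_map]
    rw [hpre]
  have hIio : IntegrableOn G (Set.Iio (-1:ℝ)) := by
    have hGe : G ∘ Neg.neg = G := by
      funext t
      simp only [Function.comp_apply, hG, hodd, neg_sq]
    rw [IntegrableOn, ← h_map, measurableEmbedding_neg.integrable_map_iff, hGe]
    exact hIoi
  have hGint : Integrable G := by
    rw [← integrableOn_univ]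
    have hsub : (Set.univ : Set ℝ) ⊆ Set.Iio (-1) ∪ (Set.Icc (-1) 1 ∪ Set.Ioi 1) := by
      intro x _
      rcases lt_or_ge x (-1) with h | h
      · exact Or.inl h
      · rcases le_or_gt x 1 with h2 | h2
        · exact Or.inr (Or.inl ⟨h, h2⟩)
        · exact Or.inr (Or.inr h2)
    exact (hIio.union (hIcc.union hIoi)).mono_set hsub
  -- apply dominated convergence
  have h_meas : ∀ᶠ v : EuclideanSpace ℝ (Fin n) in comap norm atTop,
      AEStronglyMeasurable (fun t : ℝ => |V (α t • v)|) volume :=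
    Eventually.of_forall fun v => (hmF v).aestronglyMeasurable
  have hev1 : ∀ᶠ v : EuclideanSpace ℝ (Fin n) in comap norm atTop, (1:ℝ) ≤ ‖v‖ :=
    tendsto_comap.eventually (eventually_ge_atTop 1)
  have h_bound : ∀ᶠ v : EuclideanSpace ℝ (Fin n) in comap norm atTop,
      ∀ᵐ t : ℝ, ‖|V (α t • v)|‖ ≤ G t := by
    filter_upwards [hev1] with v hv
    filter_upwards with t
    rw [Real.norm_eq_abs, abs_abs]
    calc |V (α t • v)| ≤ C * Real.sqrt (1 + ‖α t • v‖ ^ 2) ^ (-ρ) := hV _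
      _ ≤ G t := by
        apply mul_le_mul_of_nonneg_left _ hC0
        apply Real.rpow_le_rpow_of_nonpos (Real.sqrt_pos.mpr (by positivity)) _ (by linarith)
        apply Real.sqrt_le_sqrt
        rw [norm_smul, mul_pow, Real.norm_eq_abs, sq_abs]
        have h2 : 1 ≤ ‖v‖ ^ 2 := by nlinarith [norm_nonneg v]
        nlinarith [sq_nonneg (α t)]
  have h_lim : ∀ᵐ t : ℝ, Tendsto (fun v : EuclideanSpace ℝ (Fin n) => |V (α t • v)|)
      (comap norm atTop) (nhds 0) := by
    have hae : ∀ᵐ t : ℝ, t ≠ 0 := by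
      rw [ae_iff]
      have : {a : ℝ | ¬ a ≠ 0} = {0} := by ext x; simp
      rw [this]
      exact measure_singleton 0
    filter_upwards [hae] with t ht
    have ha0 : 0 < |α t| := abs_pos.mpr (hαne t ht)
    apply squeeze_zero' (Eventually.of_forall fun v => abs_nonneg _)
      (g := fun v : EuclideanSpace ℝ (Fin n) => C * (|α t| * ‖v‖) ^ (-ρ))
    · filter_upwards [hev1] with v hv
      calc |V (α t • v)| ≤ C * Real.sqrt (1 + ‖α t • v‖ ^ 2) ^ (-ρ) := hV _
        _ ≤ C * (|α t| * ‖v‖) ^ (-ρ) := by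
          apply mul_le_mul_of_nonneg_left _ hC0
          have hv0 : (0:ℝ) < ‖v‖ := lt_of_lt_of_le one_pos hv
          apply Real.rpow_le_rpow_of_nonpos (mul_pos ha0 hv0) _ (by linarith)
          have heq : |α t| * ‖v‖ = ‖α t • v‖ := by rw [norm_smul, Real.norm_eq_abs]
          rw [heq]
          exact Real.le_sqrt_of_sq_le (by linarith)
    · have h1 : Tendsto (fun v : EuclideanSpace ℝ (Fin n) => |α t| * ‖v‖)
          (comap norm atTop) atTop := tendsto_comap.const_mul_atTop ha0
      have h2 := (tendsto_rpow_neg_atTop hρ0).comp h1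
      have h3 := h2.const_mul C
      simpa using h3
  have hfinal := tendsto_integral_filter_of_dominated_convergence (μ := volume)
    (F := fun (v : EuclideanSpace ℝ (Fin n)) (t : ℝ) => |V (α t • v)|)
    (f := fun _ : ℝ => (0:ℝ)) G h_meas h_bound hGint h_lim
  simpa using hfinal
end

section
/- Let λ > 1, ρ > 1/λ, ρ ≤ 1/2, and v ∈ ℝⁿ with |v| ≥ 1. Then ∫₁^∞ t^λ ⟨t^λ v⟩^{-ρ-1} dt ≤ C·|v|^{-ρ-1} for a constant C depending only on λ and ρ, where ⟨y⟩ = √(1+|y|²). -/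
open MeasureTheory

theorem stmt15 (n : ℕ) (l ρ : ℝ) (hl : 1 < l) (hρl : 1 / l < ρ) (hρ : ρ ≤ 1 / 2) :
    ∃ C : ℝ, 0 < C ∧ ∀ v : EuclideanSpace ℝ (Fin n), 1 ≤ ‖v‖ →
      (∫ t in Set.Ioi (1:ℝ), t ^ l * (Real.sqrt (1 + (t ^ l * ‖v‖) ^ 2)) ^ (-ρ - 1))
        ≤ C * ‖v‖ ^ (-ρ - 1) := by
  have hl0 : (0:ℝ) < l := lt_trans one_pos hl
  have hlρ : 1 < l * ρ := by
    rw [div_lt_iff₀ hl0] at hρl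
    linarith [hρl]
  refine ⟨1 / (l * ρ - 1), div_pos one_pos (by linarith), fun v hv => ?_⟩
  have hv0 : (0:ℝ) < ‖v‖ := lt_of_lt_of_le one_pos hv
  have hexp : -(l*ρ) < -1 := by linarith
  have hint : IntegrableOn (fun t : ℝ => ‖v‖ ^ (-ρ - 1) * t ^ (-(l*ρ))) (Set.Ioi 1) := by
    exact (integrableOn_Ioi_rpow_of_lt hexp one_pos).const_mul _
  have hmono : ∀ᵐ t ∂(volume.restrict (Set.Ioi (1:ℝ))),
      t ^ l * (Real.sqrt (1 + (t ^ l * ‖v‖) ^ 2)) ^ (-ρ - 1)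
        ≤ ‖v‖ ^ (-ρ - 1) * t ^ (-(l*ρ)) := by
    refine (ae_restrict_iff' measurableSet_Ioi).2 (Filter.Eventually.of_forall fun t ht => ?_)
    have ht0 : (0:ℝ) < t := lt_trans one_pos ht
    have htl : (0:ℝ) < t ^ l := Real.rpow_pos_of_pos ht0 l
    have hx : (0:ℝ) < t ^ l * ‖v‖ := mul_pos htl hv0
    have hsqrt : t ^ l * ‖v‖ ≤ Real.sqrt (1 + (t ^ l * ‖v‖) ^ 2) := by
      have := Real.sqrt_le_sqrt (show (t ^ l * ‖v‖) ^ 2 ≤ 1 + (t ^ l * ‖v‖) ^ 2 by linarith)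
      rwa [Real.sqrt_sq hx.le] at this
    have h1 : (Real.sqrt (1 + (t ^ l * ‖v‖) ^ 2)) ^ (-ρ - 1) ≤ (t ^ l * ‖v‖) ^ (-ρ - 1) :=
      Real.rpow_le_rpow_of_nonpos hx hsqrt (by nlinarith [div_pos one_pos hl0])
    calc t ^ l * (Real.sqrt (1 + (t ^ l * ‖v‖) ^ 2)) ^ (-ρ - 1)
        ≤ t ^ l * (t ^ l * ‖v‖) ^ (-ρ - 1) := by
          exact mul_le_mul_of_nonneg_left h1 htl.le
      _ = ‖v‖ ^ (-ρ - 1) * t ^ (-(l*ρ)) := by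
          rw [Real.mul_rpow htl.le hv0.le, ← Real.rpow_mul ht0.le, ← mul_assoc,
            ← Real.rpow_add ht0, show l + l * (-ρ - 1) = -(l*ρ) by ring]
          ring
  have key := integral_mono_of_nonneg ?_ hint hmono
  · have hcalc : ∫ t in Set.Ioi (1:ℝ), ‖v‖ ^ (-ρ - 1) * t ^ (-(l*ρ))
        = (1 / (l * ρ - 1)) * ‖v‖ ^ (-ρ - 1) := by
      rw [integral_const_mul, integral_Ioi_rpow_of_lt hexp one_pos]
      rw [Real.one_rpow]
      have hne : (1:ℝ) - ρ * l ≠ 0 := by nlinarith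
      have hne2 : -(l * ρ) + 1 ≠ 0 := by nlinarith
      have hne3 : (-1:ℝ) + ρ * l ≠ 0 := by nlinarith
      have hne4 : l * ρ - 1 ≠ 0 := by nlinarith
      field_simp
      rw [← div_neg_eq_neg_div]; congr 1
      ring
    rw [hcalc] at key
    exact key
  · refine (ae_restrict_iff' measurableSet_Ioi).2 (Filter.Eventually.of_forall fun t ht => ?_)
    have ht0 : (0:ℝ) < t := lt_trans one_pos ht
    positivity
end
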